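/- arXiv:1703.06116 — 3 statements merged into one kernel-verified Lean document; each statement's English description precedes it below -/
import Mathlib

section
/- Let m ≥ 1 and let B₁, B₂ : [0,∞) → ℝ^{m×m} be bounded and piecewise continuous matrix-valued functions. Suppose M : [0,∞) → ℝ^{m×m} is differentiable and satisfies the matrix ODE M'(t) = B₁(t) + M(t)B₂(t) + B₂(t)ᵀM(t) with M(0) = M₀. If M₀ is symmetric positive definite and B₁(t) is symmetric positive semidefinite for every t ≥ 0, then M(t) is symmetric and positive definite for every t ≥ 0. -/
open Matrix

/-- A matrix-valued function is piecewise continuous on `[0, ∞)` if on every compact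
interval `[0, T]` it is continuous except possibly at finitely many points. -/
def PiecewiseContinuousMat {m : ℕ} (B : ℝ → Matrix (Fin m) (Fin m) ℝ) : Prop :=
  ∀ T : ℝ, 0 < T → ∃ s : Finset ℝ,
    ∀ t ∈ Set.Icc (0:ℝ) T, t ∉ s → ∀ i j, ContinuousAt (fun u => B u i j) t

open Set Filter


section Aux
variable {m : ℕ}

lemma isHermitian_of_isSymm {A : Matrix (Fin m) (Fin m) ℝ} (h : A.IsSymm) : A.IsHermitian := by
  ext i j
  simpa [Matrix.conjTranspose_apply] using h.apply i j

lemma trace_nonneg_of_posSemidef {A : Matrix (Fin m) (Fin m) ℝ} (hA : A.PosSemidef) :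
    0 ≤ A.trace := by
  rw [Matrix.trace]
  apply Finset.sum_nonneg
  intro i _
  have := hA.dotProduct_mulVec_nonneg (Pi.single i 1)
  simpa [Matrix.mulVec_single, dotProduct, Pi.single_apply, Finset.sum_ite_eq] using this

lemma trace_mul_nonneg' {A B : Matrix (Fin m) (Fin m) ℝ} (hA : A.PosSemidef) (hB : B.PosSemidef) :
    0 ≤ (A * B).trace := by
  obtain ⟨C, rfl⟩ : ∃ C : Matrix (Fin m) (Fin m) ℝ, A = star C * C :=
    by open scoped MatrixOrder in exact CStarAlgebra.nonneg_iff_eq_star_mul_self.mp hA.nonneg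
  rw [Matrix.mul_assoc, Matrix.trace_mul_comm]
  exact trace_nonneg_of_posSemidef (hB.mul_mul_conjTranspose_same C)

lemma adjugate_posSemidef {A : Matrix (Fin m) (Fin m) ℝ} (hA : A.PosDef) :
    (adjugate A).PosSemidef := by
  have hdet : A.det ≠ 0 := ne_of_gt hA.det_pos
  have hinv : (A⁻¹).PosDef := hA.inv
  have hadj : adjugate A = A.det • A⁻¹ := by
    rw [Matrix.inv_def, smul_smul, Ring.inverse_eq_inv, mul_inv_cancel₀ hdet, one_smul]
  rw [hadj]
  refine .of_dotProduct_mulVec_nonneg ?_ ?_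
  · have h1 := hinv.posSemidef.1
    ext i j
    simp only [Matrix.conjTranspose_apply, Matrix.smul_apply, star_trivial, smul_eq_mul]
    have := congrFun (congrFun h1 i) j
    simp only [Matrix.conjTranspose_apply, star_trivial] at this
    rw [this]
  · intro x
    have h2 := hinv.posSemidef.dotProduct_mulVec_nonneg x
    rw [Matrix.smul_mulVec, dotProduct_smul, smul_eq_mul]
    exact mul_nonneg (le_of_lt hA.det_pos) h2
end Aux


lemma hasDerivWithinAt_det' {m : ℕ} {A : ℝ → Matrix (Fin m) (Fin m) ℝ}
    {A' : Matrix (Fin m) (Fin m) ℝ} {s : Set ℝ} {x : ℝ}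
    (h : ∀ i j, HasDerivWithinAt (fun t => A t i j) (A' i j) s x) :
    HasDerivWithinAt (fun t => (A t).det) ((adjugate (A x) * A').trace) s x := by
  classical
  have key : HasDerivWithinAt (fun t => (A t).det)
      (∑ σ : Equiv.Perm (Fin m), ((Equiv.Perm.sign σ : ℤ) : ℝ) *
        ∑ k, (∏ j ∈ Finset.univ.erase k, A x (σ j) j) * A' (σ k) k) s x := by
    have hrw : (fun t => (A t).det) = fun t =>
        ∑ σ : Equiv.Perm (Fin m), ((Equiv.Perm.sign σ : ℤ) : ℝ) * ∏ i, A t (σ i) i := by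
      funext t; exact Matrix.det_apply' (A t)
    rw [hrw]
    apply HasDerivWithinAt.fun_sum
    intro σ _
    have hp : HasDerivWithinAt (fun t => ∏ i, A t (σ i) i)
        (∑ k, (∏ j ∈ Finset.univ.erase k, A x (σ j) j) • A' (σ k) k) s x :=
      HasDerivWithinAt.fun_finsetProd (fun i _ => h (σ i) i)
    have := hp.const_mul (((Equiv.Perm.sign σ : ℤ) : ℝ))
    simpa [smul_eq_mul, Finset.mul_sum] using this
  convert key using 1
  -- identify the trace with the permutation sum
  have expand : ∀ k : Fin m, (Matrix.updateCol (A x) k (fun i => A' i k)).det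
      = ∑ σ : Equiv.Perm (Fin m), ((Equiv.Perm.sign σ : ℤ) : ℝ) *
          ((∏ j ∈ Finset.univ.erase k, A x (σ j) j) * A' (σ k) k) := by
    intro k
    rw [Matrix.det_apply']
    refine Finset.sum_congr rfl fun σ _ => ?_
    congr 1
    rw [← Finset.mul_prod_erase Finset.univ _ (Finset.mem_univ k)]
    rw [Matrix.updateCol_apply, if_pos rfl]
    rw [mul_comm]
    congr 1
    refine Finset.prod_congr rfl fun j hj => ?_
    rw [Matrix.updateCol_apply, if_neg (Finset.ne_of_mem_erase hj)]
  have tr_eq : (adjugate (A x) * A').trace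
      = ∑ k, (Matrix.updateCol (A x) k (fun i => A' i k)).det := by
    have : ∀ k : Fin m, (Matrix.updateCol (A x) k (fun i => A' i k)).det
        = (adjugate (A x) *ᵥ (fun i => A' i k)) k := by
      intro k
      rw [← Matrix.cramer_eq_adjugate_mulVec, Matrix.cramer_apply]
    simp_rw [this]
    rw [Matrix.trace]
    refine Finset.sum_congr rfl fun k _ => ?_
    simp [Matrix.mulVec, Matrix.mul_apply, dotProduct, Matrix.diag]
  rw [tr_eq]
  simp_rw [expand, Finset.mul_sum]
  rw [Finset.sum_comm]


lemma frequently_slope_lt {f : ℝ → ℝ} {y x : ℝ} (h : HasDerivWithinAt f y (Set.Ici x) x) :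
    ∀ r, y < r → ∃ᶠ z in nhdsWithin x (Set.Ioi x), (z - x)⁻¹ * (f z - f x) < r := by
  intro r hr
  have h' : Tendsto (slope f x) (nhdsWithin x (Set.Ioi x)) (nhds y) := by
    have := hasDerivWithinAt_iff_tendsto_slope.mp h
    rwa [Set.Ici_sdiff_left] at this
  have hev : ∀ᶠ z in nhdsWithin x (Set.Ioi x), slope f x z < r := h'.eventually_lt_const hr
  exact (hev.mono fun z hz => by simpa [slope_def_field, div_eq_inv_mul] using hz).frequently

lemma le_of_left_lim' {g : ℝ → ℝ} {t c : ℝ} (ht : 0 < t)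
    (hg : ContinuousWithinAt g (Set.Ici 0) t)
    (h : ∀ s, 0 < s → s < t → c ≤ g s) : c ≤ g t := by
  have hne : (nhdsWithin t (Set.Ioo (0:ℝ) t)).NeBot := by
    rw [← mem_closure_iff_nhdsWithin_neBot, closure_Ioo (ne_of_gt ht).symm]
    exact ⟨le_of_lt ht, le_refl t⟩
  have htend : Tendsto g (nhdsWithin t (Set.Ioo (0:ℝ) t)) (nhds (g t)) :=
    hg.mono (fun y hy => le_of_lt hy.1)
  exact ge_of_tendsto htend (eventually_mem_nhdsWithin.mono fun s hs => h s hs.1 hs.2)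

lemma posDef_nearby {m : ℕ} (hm : 1 ≤ m) {A : Matrix (Fin m) (Fin m) ℝ} (hA : A.PosDef) :
    ∃ ε > (0:ℝ), ∀ B : Matrix (Fin m) (Fin m) ℝ, B.IsHermitian →
      (∀ i j, |B i j - A i j| ≤ ε) → B.PosDef := by
  classical
  set qf : Matrix (Fin m) (Fin m) ℝ → (Fin m → ℝ) → ℝ :=
    fun P v => ∑ i, v i * ∑ j, P i j * v j with hqf
  have hqf_eq : ∀ (P : Matrix (Fin m) (Fin m) ℝ) (v : Fin m → ℝ),
      qf P v = v ⬝ᵥ (P *ᵥ v) := fun P v => rfl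
  have hq : Continuous (qf A) := by
    exact continuous_finset_sum _ fun i _ => (continuous_apply i).mul
      (continuous_finset_sum _ fun j _ => (continuous_const.mul (continuous_apply j)))
  -- the sphere is nonempty and compact
  set i₀ : Fin m := ⟨0, hm⟩
  have hv₀ : ‖(Pi.single i₀ 1 : Fin m → ℝ)‖ = 1 := by
    apply le_antisymm
    · rw [pi_norm_le_iff_of_nonneg (by norm_num)]
      intro i
      rcases eq_or_ne i i₀ with rfl | hne
      · simp
      · simp [Pi.single_apply, hne]
    · calc (1:ℝ) = ‖(Pi.single i₀ 1 : Fin m → ℝ) i₀‖ := by simp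
        _ ≤ _ := norm_le_pi_norm _ i₀
  have hsne : (Metric.sphere (0 : Fin m → ℝ) 1).Nonempty := by
    refine ⟨Pi.single i₀ 1, ?_⟩
    simpa [mem_sphere_iff_norm] using hv₀
  obtain ⟨v₁, hv₁mem, hv₁min⟩ :=
    (isCompact_sphere (0 : Fin m → ℝ) 1).exists_isMinOn hsne hq.continuousOn
  have hv₁norm : ‖v₁‖ = 1 := by simpa [mem_sphere_iff_norm] using hv₁mem
  have hv₁ne : v₁ ≠ 0 := by
    intro h0; rw [h0] at hv₁norm; simp at hv₁norm
  set c : ℝ := qf A v₁ with hc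
  have hcpos : 0 < c := by
    have := hA.dotProduct_mulVec_pos hv₁ne
    rw [hc, hqf_eq]
    simpa [star_trivial] using this
  -- scaling of the quadratic form
  have hscale : ∀ (P : Matrix (Fin m) (Fin m) ℝ) (a : ℝ) (u : Fin m → ℝ),
      qf P (a • u) = a ^ 2 * qf P u := by
    intro P a u
    rw [hqf, Finset.mul_sum]
    refine Finset.sum_congr rfl fun i _ => ?_
    simp only [Pi.smul_apply, smul_eq_mul, Finset.mul_sum]
    exact Finset.sum_congr rfl fun j _ => by ring
  -- lower bound for the quadratic form of A
  have hAlow : ∀ v : Fin m → ℝ, c * ‖v‖ ^ 2 ≤ qf A v := by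
    intro v
    rcases eq_or_ne v 0 with rfl | hv
    · simp [hqf]
    · have hnv : (0:ℝ) < ‖v‖ := norm_pos_iff.mpr hv
      have hu : (‖v‖⁻¹ • v) ∈ Metric.sphere (0 : Fin m → ℝ) 1 := by
        simp [norm_smul, abs_of_pos (inv_pos.mpr hnv), inv_mul_cancel₀ (ne_of_gt hnv)]
      have h1 : c ≤ qf A (‖v‖⁻¹ • v) := hv₁min hu
      have h2 : qf A (‖v‖⁻¹ • v) = (‖v‖⁻¹) ^ 2 * qf A v := hscale A _ v
      rw [h2] at h1
      have := mul_le_mul_of_nonneg_left h1 (le_of_lt (pow_pos hnv 2))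
      calc c * ‖v‖ ^ 2 = ‖v‖ ^ 2 * c := by ring
        _ ≤ ‖v‖ ^ 2 * ((‖v‖⁻¹) ^ 2 * qf A v) := this
        _ = qf A v := by field_simp
  -- perturbation bound
  refine ⟨c / (2 * (m:ℝ) ^ 2 + 1), by positivity, fun B hB hclose => ?_⟩
  refine .of_dotProduct_mulVec_pos hB fun v hv => ?_
  have hnv : (0:ℝ) < ‖v‖ := norm_pos_iff.mpr hv
  set ε : ℝ := c / (2 * (m:ℝ) ^ 2 + 1) with hε
  have hεpos : 0 < ε := by positivity
  have hdiff : |qf B v - qf A v| ≤ ε * ((m:ℝ) * ‖v‖) ^ 2 := by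
    have h1 : qf B v - qf A v = ∑ i, v i * ∑ j, (B i j - A i j) * v j := by
      rw [hqf, ← Finset.sum_sub_distrib]
      refine Finset.sum_congr rfl fun i _ => ?_
      rw [← mul_sub, ← Finset.sum_sub_distrib]
      congr 1
      exact Finset.sum_congr rfl fun j _ => by ring
    rw [h1]
    have habs : ∀ i : Fin m, |v i| ≤ ‖v‖ := fun i => by
      rw [← Real.norm_eq_abs]; exact norm_le_pi_norm v i
    calc |∑ i, v i * ∑ j, (B i j - A i j) * v j|
        ≤ ∑ i, |v i * ∑ j, (B i j - A i j) * v j| := Finset.abs_sum_le_sum_abs _ _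
      _ ≤ ∑ i : Fin m, ‖v‖ * ((m:ℝ) * (ε * ‖v‖)) := by
          refine Finset.sum_le_sum fun i _ => ?_
          rw [abs_mul]
          refine mul_le_mul (habs i) ?_ (abs_nonneg _) (norm_nonneg _)
          calc |∑ j, (B i j - A i j) * v j| ≤ ∑ j, |(B i j - A i j) * v j| :=
                Finset.abs_sum_le_sum_abs _ _
            _ ≤ ∑ j : Fin m, ε * ‖v‖ := by
                refine Finset.sum_le_sum fun j _ => ?_
                rw [abs_mul]
                exact mul_le_mul (hclose i j) (habs j) (abs_nonneg _) (le_of_lt hεpos)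
            _ = (m:ℝ) * (ε * ‖v‖) := by simp [Finset.sum_const, Finset.card_univ]
      _ = (m:ℝ) * (‖v‖ * ((m:ℝ) * (ε * ‖v‖))) := by simp [Finset.sum_const, Finset.card_univ]
      _ = ε * ((m:ℝ) * ‖v‖) ^ 2 := by ring
  have hqBv : 0 < qf B v := by
    have h2 : qf A v - |qf B v - qf A v| ≤ qf B v := by
      have := abs_le.mp hdiff
      linarith [(abs_le.mp (le_refl |qf B v - qf A v|)), neg_abs_le (qf B v - qf A v)]
    have h3 : ε * ((m:ℝ) * ‖v‖) ^ 2 < c * ‖v‖ ^ 2 := by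
      have hm2 : ε * (m:ℝ) ^ 2 < c := by
        rw [hε]
        rw [div_mul_eq_mul_div, div_lt_iff₀ (by positivity)]
        nlinarith [hcpos, sq_nonneg (m:ℝ)]
      calc ε * ((m:ℝ) * ‖v‖) ^ 2 = (ε * (m:ℝ) ^ 2) * ‖v‖ ^ 2 := by ring
        _ < c * ‖v‖ ^ 2 := by
            exact mul_lt_mul_of_pos_right hm2 (by positivity)
    have := hAlow v
    nlinarith [neg_abs_le (qf B v - qf A v)]
  have : 0 < v ⬝ᵥ (B *ᵥ v) := by rw [← hqf_eq]; exact hqBv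
  simpa [star_trivial] using this


lemma isSymm_of_ode {m : ℕ} {B₁ B₂ M : ℝ → Matrix (Fin m) (Fin m) ℝ} {C : ℝ} (hC0 : 0 ≤ C)
    (hCb : ∀ t ≥ (0:ℝ), ∀ i j, |B₂ t i j| ≤ C)
    (hode : ∀ t ≥ (0:ℝ), ∀ i j, HasDerivWithinAt (fun s => M s i j)
      ((B₁ t + M t * B₂ t + (B₂ t)ᵀ * M t) i j) (Set.Ici 0) t)
    (hM0symm : (M 0).IsSymm)
    (hB₁symm : ∀ t ≥ (0:ℝ), (B₁ t).IsSymm) :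
    ∀ b ≥ (0:ℝ), (M b).IsSymm := by
  intro b hb
  set f : ℝ → (Fin m → Fin m → ℝ) := fun t i j => M t i j - M t j i with hf
  set f' : ℝ → (Fin m → Fin m → ℝ) := fun t i j =>
    (∑ k, (M t i k - M t k i) * B₂ t k j) + (∑ k, B₂ t k i * (M t k j - M t j k)) with hf'
  have hderiv : ∀ x ∈ Set.Ico (0:ℝ) b, HasDerivWithinAt f (f' x) (Set.Ici x) x := by
    intro x hx
    rw [hasDerivWithinAt_pi]; intro i
    rw [hasDerivWithinAt_pi]; intro j
    have h1 := (hode x hx.1 i j).mono (Set.Ici_subset_Ici.mpr hx.1)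
    have h2 := (hode x hx.1 j i).mono (Set.Ici_subset_Ici.mpr hx.1)
    have h3 := h1.sub h2
    convert h3 using 1
    · rfl
    have hb1 : B₁ x j i = B₁ x i j := (hB₁symm x hx.1).apply i j
    simp only [hf', Matrix.add_apply, Matrix.mul_apply, Matrix.transpose_apply]
    rw [hb1]
    simp only [sub_mul, mul_sub, Finset.sum_sub_distrib]
    simp only [mul_comm]
    abel
  have hbound : ∀ x ∈ Set.Ico (0:ℝ) b, ‖f' x‖ ≤ (2 * (m:ℝ) * C) * ‖f x‖ + 0 := by
    intro x hx
    rw [add_zero]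
    have hKnn : 0 ≤ 2 * (m:ℝ) * C * ‖f x‖ := by positivity
    rw [pi_norm_le_iff_of_nonneg hKnn]
    intro i
    rw [pi_norm_le_iff_of_nonneg hKnn]
    intro j
    rw [Real.norm_eq_abs]
    have hent : ∀ i' k : Fin m, |M x i' k - M x k i'| ≤ ‖f x‖ := by
      intro i' k
      calc |M x i' k - M x k i'| = ‖f x i' k‖ := by rw [Real.norm_eq_abs]
        _ ≤ ‖f x i'‖ := norm_le_pi_norm (f x i') k
        _ ≤ ‖f x‖ := norm_le_pi_norm (f x) i'
    have hB : ∀ k j' : Fin m, |B₂ x k j'| ≤ C := fun k j' => hCb x hx.1 k j'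
    calc |f' x i j|
        ≤ |∑ k, (M x i k - M x k i) * B₂ x k j| + |∑ k, B₂ x k i * (M x k j - M x j k)| := by
          simp only [hf']; exact abs_add_le _ _
      _ ≤ (∑ k : Fin m, ‖f x‖ * C) + (∑ k : Fin m, C * ‖f x‖) := by
          refine add_le_add ?_ ?_
          · refine le_trans (Finset.abs_sum_le_sum_abs _ _) (Finset.sum_le_sum fun k _ => ?_)
            rw [abs_mul]
            exact mul_le_mul (hent i k) (hB k j) (abs_nonneg _) (norm_nonneg _)
          · refine le_trans (Finset.abs_sum_le_sum_abs _ _) (Finset.sum_le_sum fun k _ => ?_)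
            rw [abs_mul]
            exact mul_le_mul (hB k i) (hent k j) (abs_nonneg _) hC0
      _ = 2 * (m:ℝ) * C * ‖f x‖ := by
          simp only [Finset.sum_const, Finset.card_univ, Fintype.card_fin, nsmul_eq_mul]
          ring
  have hfc : ContinuousOn f (Set.Icc 0 b) := by
    intro x hx
    have hcw : ContinuousWithinAt f (Set.Ici 0) x := by
      rw [continuousWithinAt_pi]; intro i
      rw [continuousWithinAt_pi]; intro j
      exact ((hode x hx.1 i j).continuousWithinAt).sub ((hode x hx.1 j i).continuousWithinAt)
    exact hcw.mono (fun y hy => hy.1)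
  have h0 : ‖f 0‖ ≤ 0 := by
    have hz : f 0 = 0 := by
      funext i j
      have := hM0symm.apply j i
      simp only [hf, Pi.zero_apply]
      rw [this, sub_self]
    simp [hz]
  have hg := norm_le_gronwallBound_of_norm_deriv_right_le hfc hderiv h0 hbound b
    (Set.right_mem_Icc.mpr hb)
  rw [gronwallBound_ε0_δ0] at hg
  have hf0 : f b = 0 := norm_le_zero_iff.mp hg
  refine Matrix.IsSymm.ext fun i j => ?_
  have h := congrFun (congrFun hf0 j) i
  simp only [hf, Pi.zero_apply] at h
  linarith [h]


/-- If `M' = B₁ + M B₂ + B₂ᵀ M`, `M(0) = M₀` is symmetric positive definite, `B₁, B₂` are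
bounded and piecewise continuous, and `B₁(t)` is symmetric positive semidefinite for all
`t ≥ 0`, then `M(t)` is symmetric positive definite for all `t ≥ 0`. -/
theorem matrix_ode_posDef {m : ℕ} (hm : 1 ≤ m)
    (B₁ B₂ : ℝ → Matrix (Fin m) (Fin m) ℝ)
    (M : ℝ → Matrix (Fin m) (Fin m) ℝ) (M₀ : Matrix (Fin m) (Fin m) ℝ)
    (hB₁bdd : ∃ C : ℝ, ∀ t ≥ (0:ℝ), ∀ i j, |B₁ t i j| ≤ C)
    (hB₂bdd : ∃ C : ℝ, ∀ t ≥ (0:ℝ), ∀ i j, |B₂ t i j| ≤ C)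
    (hB₁pc : PiecewiseContinuousMat B₁) (hB₂pc : PiecewiseContinuousMat B₂)
    (hode : ∀ t ≥ (0:ℝ), ∀ i j, HasDerivWithinAt (fun s => M s i j)
      ((B₁ t + M t * B₂ t + (B₂ t)ᵀ * M t) i j) (Set.Ici 0) t)
    (hM0 : M 0 = M₀)
    (hM₀symm : M₀.IsSymm) (hM₀pos : M₀.PosDef)
    (hB₁symm : ∀ t ≥ (0:ℝ), (B₁ t).IsSymm)
    (hB₁pos : ∀ t ≥ (0:ℝ), (B₁ t).PosSemidef) :
    ∀ t ≥ (0:ℝ), (M t).IsSymm ∧ (M t).PosDef := by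
  classical
  obtain ⟨C₂0, hC₂0⟩ := hB₂bdd
  set C := max C₂0 0 with hCdef
  have hC0 : (0:ℝ) ≤ C := le_max_right _ _
  have hCb : ∀ t ≥ (0:ℝ), ∀ i j, |B₂ t i j| ≤ C := fun t ht i j =>
    le_trans (hC₂0 t ht i j) (le_max_left _ _)
  have hM0symm : (M 0).IsSymm := by rw [hM0]; exact hM₀symm
  have hM0pos : (M 0).PosDef := by rw [hM0]; exact hM₀pos
  have hsymm : ∀ t ≥ (0:ℝ), (M t).IsSymm := fun t ht =>
    isSymm_of_ode hC0 hCb hode hM0symm hB₁symm t ht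
  have hherm : ∀ t ≥ (0:ℝ), (M t).IsHermitian := fun t ht => isHermitian_of_isSymm (hsymm t ht)
  set K : ℝ := 2 * (m:ℝ) * C with hK
  have hK0 : 0 ≤ K := by positivity
  have htrB₂ : ∀ t ≥ (0:ℝ), -((m:ℝ) * C) ≤ (B₂ t).trace := by
    intro t ht
    have h1 : |(B₂ t).trace| ≤ (m:ℝ) * C := by
      rw [Matrix.trace]
      calc |∑ i, (B₂ t).diag i| ≤ ∑ i, |(B₂ t).diag i| := Finset.abs_sum_le_sum_abs _ _
        _ ≤ ∑ _i : Fin m, C := Finset.sum_le_sum fun i _ => hCb t ht i i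
        _ = (m:ℝ) * C := by simp [Finset.sum_const, Finset.card_univ, mul_comm]
    linarith [neg_abs_le ((B₂ t).trace), (abs_le.mp h1).1]
  have hMc : ∀ i j, ContinuousOn (fun u => M u i j) (Set.Ici 0) := fun i j u hu =>
    (hode u hu i j).continuousWithinAt
  have hdetc : ContinuousOn (fun u => (M u).det) (Set.Ici 0) := fun u hu =>
    (hasDerivWithinAt_det' (fun i j => hode u hu i j)).continuousWithinAt
  intro t ht
  refine ⟨hsymm t ht, ?_⟩
  by_contra hnot
  set S : Set ℝ := {u | 0 ≤ u ∧ ¬ (M u).PosDef} with hSdef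
  have hSne : S.Nonempty := ⟨t, ht, hnot⟩
  have hSbdd : BddBelow S := ⟨0, fun s hs => hs.1⟩
  set T : ℝ := sInf S with hTdef
  have hT0 : 0 ≤ T := le_csInf hSne fun s hs => hs.1
  have hPD : ∀ s, 0 ≤ s → s < T → (M s).PosDef := by
    intro s hs hsT
    by_contra hnot'
    exact absurd (csInf_le hSbdd ⟨hs, hnot'⟩) (not_le.mpr hsT)
  have hTnot : ¬ (M T).PosDef := by
    intro hTPD
    obtain ⟨ε, hε, hball⟩ := posDef_nearby hm hTPD
    have hev : ∀ᶠ u in nhdsWithin T (Set.Ici 0), ∀ i, ∀ j, |M u i j - M T i j| ≤ ε := by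
      rw [eventually_all]
      intro i
      rw [eventually_all]
      intro j
      filter_upwards [(hMc i j T hT0) (Metric.closedBall_mem_nhds _ hε)] with u hu
      simpa [Real.dist_eq] using hu
    rw [Filter.eventually_iff, Metric.mem_nhdsWithin_iff] at hev
    obtain ⟨δ, hδ, hδprop⟩ := hev
    obtain ⟨s, hsS, hsd⟩ := Metric.mem_closure_iff.mp (csInf_mem_closure hSne hSbdd) δ hδ
    exact hsS.2 (hball (M s) (hherm s hsS.1)
      (hδprop ⟨Metric.mem_ball.mpr (by rwa [dist_comm] at hsd), hsS.1⟩))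
  have hTpos : 0 < T := by
    rcases lt_or_eq_of_le hT0 with h | h
    · exact h
    · exact absurd (show (M T).PosDef by rw [← h]; exact hM0pos) hTnot
  have hpsd : (M T).PosSemidef := by
    refine .of_dotProduct_mulVec_nonneg (hherm T hT0) fun v => ?_
    rcases eq_or_ne v 0 with rfl | hv
    · simp
    · have hq : ContinuousWithinAt (fun u => star v ⬝ᵥ (M u *ᵥ v)) (Set.Ici 0) T := by
        have heq : (fun u => star v ⬝ᵥ (M u *ᵥ v))
            = fun u => ∑ i, star v i * ∑ j, M u i j * v j := rfl
        rw [heq]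
        exact tendsto_finset_sum _ fun i _ =>
          tendsto_const_nhds.mul (tendsto_finset_sum _ fun j _ =>
            ((hMc i j T hT0).mul tendsto_const_nhds))
      exact le_of_left_lim' hTpos hq
        (fun s hs1 hs2 => le_of_lt ((hPD s (le_of_lt hs1) hs2).dotProduct_mulVec_pos hv))
  have hdetlow : ∀ s, 0 ≤ s → s < T → M₀.det * Real.exp (-(K * s)) ≤ (M s).det := by
    intro s hs hsT
    set g : ℝ → ℝ := fun u => M₀.det - (M u).det * Real.exp (K * u) with hg
    set g' : ℝ → ℝ := fun u => -((adjugate (M u) * (B₁ u + M u * B₂ u + (B₂ u)ᵀ * M u)).trace *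
        Real.exp (K * u) + (M u).det * (Real.exp (K * u) * K)) with hg'
    have hgd : ∀ x ∈ Set.Ico (0:ℝ) s, HasDerivWithinAt g (g' x) (Set.Ici x) x := by
      intro x hx
      have hdet : HasDerivWithinAt (fun u => (M u).det)
          ((adjugate (M x) * (B₁ x + M x * B₂ x + (B₂ x)ᵀ * M x)).trace) (Set.Ici x) x :=
        hasDerivWithinAt_det' (fun i j => (hode x hx.1 i j).mono (Set.Ici_subset_Ici.mpr hx.1))
      have hexp : HasDerivWithinAt (fun u => Real.exp (K * u))
          (Real.exp (K * x) * K) (Set.Ici x) x := by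
        have h1 : HasDerivAt (fun u : ℝ => K * u) K x := by
          simpa using (hasDerivAt_id x).const_mul K
        exact (h1.exp).hasDerivWithinAt
      have hmul := (hdet.mul hexp).const_sub M₀.det
      exact hmul
    have hgb : ∀ x ∈ Set.Ico (0:ℝ) s, g' x ≤ 0 * g x + 0 := by
      intro x hx
      rw [zero_mul, zero_add]
      have hxT : x < T := lt_trans hx.2 hsT
      have hPDx := hPD x hx.1 hxT
      have hdetpos := hPDx.det_pos
      have hadj := adjugate_posSemidef hPDx
      have hexpand : (adjugate (M x) * (B₁ x + M x * B₂ x + (B₂ x)ᵀ * M x)).trace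
          = (adjugate (M x) * B₁ x).trace + (M x).det * (B₂ x).trace
            + (M x).det * (B₂ x).trace := by
        rw [Matrix.mul_add, Matrix.mul_add, Matrix.trace_add, Matrix.trace_add]
        congr 1
        · congr 1
          rw [← Matrix.mul_assoc, Matrix.adjugate_mul, Matrix.smul_mul, Matrix.one_mul,
            Matrix.trace_smul, smul_eq_mul]
        · rw [Matrix.trace_mul_comm, Matrix.mul_assoc, Matrix.mul_adjugate, Matrix.mul_smul,
            Matrix.mul_one, Matrix.trace_smul, smul_eq_mul, Matrix.trace_transpose]
      have htr := htrB₂ x hx.1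
      have h1 : 0 ≤ (adjugate (M x) * B₁ x).trace := trace_mul_nonneg' hadj (hB₁pos x hx.1)
      have h2 : -(K * (M x).det) ≤ 2 * ((M x).det * (B₂ x).trace) := by
        have h3 : (M x).det * (-((m:ℝ) * C)) ≤ (M x).det * (B₂ x).trace :=
          mul_le_mul_of_nonneg_left htr (le_of_lt hdetpos)
        rw [hK]
        nlinarith [h3]
      have hepos := Real.exp_pos (K * x)
      have hX : 0 ≤ ((adjugate (M x) * B₁ x).trace) * Real.exp (K * x) :=
        mul_nonneg h1 (le_of_lt hepos)
      have hY : 0 ≤ (2 * ((M x).det * (B₂ x).trace) + K * (M x).det) * Real.exp (K * x) :=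
        mul_nonneg (by linarith) (le_of_lt hepos)
      simp only [hg']
      rw [hexpand]
      nlinarith [hX, hY]
    have hgc : ContinuousOn g (Set.Icc 0 s) := by
      apply ContinuousOn.sub continuousOn_const
      exact (hdetc.mono (fun y hy => hy.1)).mul
        ((Real.continuous_exp.comp (continuous_const.mul continuous_id)).continuousOn)
    have hga : g 0 ≤ 0 := by simp [hg, hM0, Real.exp_zero]
    have hliminf : ∀ x ∈ Set.Ico (0:ℝ) s, ∀ r, g' x < r →
        ∃ᶠ z in nhdsWithin x (Set.Ioi x), (z - x)⁻¹ * (g z - g x) < r :=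
      fun x hx => frequently_slope_lt (hgd x hx)
    have hgr := le_gronwallBound_of_liminf_deriv_right_le hgc hliminf hga hgb s
      (Set.right_mem_Icc.mpr hs)
    rw [sub_zero, gronwallBound_ε0_δ0] at hgr
    have h4 : M₀.det ≤ (M s).det * Real.exp (K * s) := by
      simp only [hg] at hgr; linarith
    rw [Real.exp_neg]
    exact (mul_inv_le_iff₀ (Real.exp_pos _)).mpr h4
  have hdetM₀ : 0 < M₀.det := hM₀pos.det_pos
  have hdetT : M₀.det * Real.exp (-(K * T)) ≤ (M T).det := by
    apply le_of_left_lim' hTpos (hdetc T hT0)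
    intro s hs1 hs2
    calc M₀.det * Real.exp (-(K * T)) ≤ M₀.det * Real.exp (-(K * s)) := by
          apply mul_le_mul_of_nonneg_left _ (le_of_lt hdetM₀)
          apply Real.exp_le_exp.mpr
          nlinarith [hK0, hs1, hs2]
      _ ≤ (M s).det := hdetlow s (le_of_lt hs1) hs2
  have hdetTpos : 0 < (M T).det :=
    lt_of_lt_of_le (mul_pos hdetM₀ (Real.exp_pos _)) hdetT
  have hTPD : (M T).PosDef := by
    refine .of_dotProduct_mulVec_pos (hherm T hT0) fun v hv => ?_
    rcases lt_or_eq_of_le (hpsd.dotProduct_mulVec_nonneg v) with h | h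
    · exact h
    · exfalso
      have h0 : M T *ᵥ v = 0 := (hpsd.dotProduct_mulVec_zero_iff v).mp h.symm
      exact hv (Matrix.eq_zero_of_mulVec_eq_zero (ne_of_gt hdetTpos) h0)
  exact hTnot hTPD
end

section
/- Let m ≥ 1, let M be an m×m real symmetric positive definite matrix, N an m×m real symmetric matrix, X, P ∈ ℝ^m, S ∈ ℝ, A ∈ ℂ. Let f : ℝ^m → ℂ be three times continuously differentiable with its third derivative uniformly bounded by L on ℝ^m. Then there exists C > 0 (depending on M, A, L, m but not on ε) such that for every ε > 0 and every x ∈ ℝ^m, | ( f(x) − f(X) − Df(X)(x−X) − ½ D²f(X)[x−X, x−X] ) · G^ε(M,N,X,P,S,A;x) | ≤ C · ε^{3/2}. -/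
open Matrix Complex

/-- The Gaussian beam
`G^ε(M,N,X,P,S,A;x) = A exp(−(x−X)ᵀ(M+iN)(x−X)/(2ε) + iPᵀ(x−X)/ε + iS/ε)`. -/
noncomputable def gaussianBeam {m : ℕ} (ε : ℝ) (M N : Matrix (Fin m) (Fin m) ℝ)
    (X P : EuclideanSpace ℝ (Fin m)) (S : ℝ) (A : ℂ)
    (x : EuclideanSpace ℝ (Fin m)) : ℂ :=
  A * Complex.exp (
    -((∑ i, ∑ j, ((M i j : ℂ) + Complex.I * (N i j : ℂ)) * ((x i - X i : ℝ) : ℂ)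
        * ((x j - X j : ℝ) : ℂ)) / (2 * (ε : ℂ)))
    + Complex.I * ((∑ i, P i * (x i - X i) : ℝ) : ℂ) / (ε : ℂ)
    + Complex.I * (S : ℂ) / (ε : ℂ))

set_option maxHeartbeats 1000000
set_option synthInstance.maxHeartbeats 400000



section Aux

variable {m : ℕ}

local notation "E" => EuclideanSpace ℝ (Fin m)

/-- Positive definite quadratic form lower bound. -/
lemma quad_lb (hm : 1 ≤ m) (M : Matrix (Fin m) (Fin m) ℝ) (hMpos : M.PosDef) :
    ∃ c : ℝ, 0 < c ∧ ∀ v : E, c * ‖v‖ ^ 2 ≤ ∑ i, ∑ j, M i j * v i * v j := by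
  set Q : E → ℝ := fun v => ∑ i, ∑ j, M i j * v i * v j with hQdef
  have hQcont : Continuous Q := by
    apply continuous_finset_sum; intro i _
    apply continuous_finset_sum; intro j _
    fun_prop
  have hQpos : ∀ v : E, v ≠ 0 → 0 < Q v := by
    intro v hv
    have h := hMpos.dotProduct_mulVec_pos (x := (v : Fin m → ℝ)) (fun h0 => hv (by ext i; simp [h0]))
    have heq : star (v : Fin m → ℝ) ⬝ᵥ M *ᵥ (v : Fin m → ℝ) = Q v := by
      simp only [star_trivial, dotProduct, Matrix.mulVec, hQdef]
      apply Finset.sum_congr rfl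
      intro i _
      rw [Finset.mul_sum]
      apply Finset.sum_congr rfl
      intro j _
      ring
    rwa [heq] at h
  have hQsmul : ∀ (r : ℝ) (v : E), Q (r • v) = r ^ 2 * Q v := by
    intro r v
    simp only [hQdef, Finset.mul_sum]
    apply Finset.sum_congr rfl; intro i _
    apply Finset.sum_congr rfl; intro j _
    simp only [PiLp.smul_apply, smul_eq_mul]
    ring
  haveI : Nontrivial E := by
    refine ⟨0, EuclideanSpace.single ⟨0, hm⟩ 1, fun h => ?_⟩
    have := congrArg (fun w : E => w ⟨0, hm⟩) h
    simp [EuclideanSpace.single_apply] at this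
  obtain ⟨v₀, hv₀⟩ := exists_norm_eq E (zero_le_one)
  obtain ⟨u, hu, hmin⟩ := (isCompact_sphere (0 : E) 1).exists_isMinOn
    ⟨v₀, by simpa [Metric.mem_sphere, dist_eq_norm] using hv₀⟩ hQcont.continuousOn
  have hunorm : ‖u‖ = 1 := by simpa [Metric.mem_sphere, dist_eq_norm] using hu
  have hune : u ≠ 0 := by intro h; rw [h] at hunorm; simp at hunorm
  refine ⟨Q u, hQpos u hune, fun v => ?_⟩
  rcases eq_or_ne v 0 with rfl | hv
  · simp [hQdef]
  · have hnv : (0:ℝ) < ‖v‖ := norm_pos_iff.mpr hv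
    have hmem : (‖v‖⁻¹ • v) ∈ Metric.sphere (0 : E) 1 := by
      simp [norm_smul, abs_of_pos (inv_pos.mpr hnv), inv_mul_cancel₀ (ne_of_gt hnv)]
    have h1 : Q u ≤ Q (‖v‖⁻¹ • v) := hmin hmem
    rw [hQsmul] at h1
    have h2 : Q u * ‖v‖ ^ 2 ≤ (‖v‖⁻¹ ^ 2 * Q v) * ‖v‖ ^ 2 := by
      apply mul_le_mul_of_nonneg_right h1 (by positivity)
    calc Q u * ‖v‖ ^ 2 ≤ (‖v‖⁻¹ ^ 2 * Q v) * ‖v‖ ^ 2 := h2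
      _ = Q v := by field_simp
end Aux

lemma cube_exp_bound {c ε : ℝ} (hc : 0 < c) (hε : 0 < ε) (t : ℝ) (ht : 0 ≤ t) :
    t ^ 3 * Real.exp (-(c * t ^ 2) / (2 * ε)) ≤ (1 + 216 / c ^ 3) * (ε * Real.sqrt ε) := by
  set s := Real.sqrt ε with hs
  have hspos : 0 < s := Real.sqrt_pos.mpr hε
  have hs2 : s ^ 2 = ε := Real.sq_sqrt hε.le
  have hfac : (1:ℝ) ≤ 1 + 216 / c ^ 3 := by
    have : 0 < 216 / c ^ 3 := by positivity
    linarith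
  have hεs : 0 < ε * s := by positivity
  rcases le_or_gt t s with hts | hts
  · have h1 : t ^ 3 ≤ s ^ 3 := pow_le_pow_left₀ ht hts 3
    have h2 : Real.exp (-(c * t ^ 2) / (2 * ε)) ≤ 1 := by
      rw [Real.exp_le_one_iff]
      have : 0 ≤ c * t ^ 2 := by positivity
      apply div_nonpos_of_nonpos_of_nonneg <;> nlinarith
    have h3 : s ^ 3 = ε * s := by rw [← hs2]; ring
    nlinarith [pow_nonneg ht 3]
  · have htpos : 0 < t := lt_trans hspos hts
    set x := c * t ^ 2 / (2 * ε) with hx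
    have hxpos : 0 < x := by positivity
    have hkey : x ^ 3 / 27 ≤ Real.exp x := by
      have h1 : x / 3 ≤ Real.exp (x / 3) := by
        have := Real.add_one_le_exp (x / 3)
        linarith
      have h2 : (x / 3) ^ 3 ≤ Real.exp (x / 3) ^ 3 :=
        pow_le_pow_left₀ (by positivity) h1 3
      have h3 : Real.exp (x / 3) ^ 3 = Real.exp x := by
        rw [← Real.exp_nat_mul]
        congr 1
        push_cast
        ring
      calc x ^ 3 / 27 = (x / 3) ^ 3 := by ring
        _ ≤ Real.exp (x / 3) ^ 3 := h2
        _ = Real.exp x := h3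
    have hexp : Real.exp (-(c * t ^ 2) / (2 * ε)) ≤ 27 / x ^ 3 := by
      rw [show -(c * t ^ 2) / (2 * ε) = -x by rw [hx]; ring, Real.exp_neg]
      have h4 : (Real.exp x)⁻¹ ≤ (x ^ 3 / 27)⁻¹ := by
        apply inv_anti₀ (by positivity) hkey
      refine le_trans h4 ?_
      rw [inv_div]
    have ht3 : ε * s ≤ t ^ 3 := by
      have : s ^ 3 ≤ t ^ 3 := pow_le_pow_left₀ hspos.le hts.le 3
      nlinarith
    have hx3 : x ^ 3 = c ^ 3 * t ^ 6 / (8 * ε ^ 3) := by rw [hx]; ring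
    have hcalc : t ^ 3 * (27 / x ^ 3) = 216 * ε ^ 3 / (c ^ 3 * t ^ 3) := by
      rw [hx3]
      field_simp
      ring
    have hfinal : 216 * ε ^ 3 / (c ^ 3 * t ^ 3) ≤ 216 / c ^ 3 * (ε * s) := by
      rw [div_le_iff₀ (by positivity)]
      have hε3 : ε ^ 3 = (ε * s) ^ 2 := by rw [← hs2]; ring
      have h216 : (0:ℝ) < 216 / c ^ 3 := by positivity
      calc 216 * ε ^ 3 = 216 / c ^ 3 * ((ε * s) ^ 2) * c ^ 3 := by
            rw [hε3]; field_simp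
        _ ≤ 216 / c ^ 3 * ((ε * s) * t ^ 3) * c ^ 3 := by
            apply mul_le_mul_of_nonneg_right _ (by positivity)
            apply mul_le_mul_of_nonneg_left _ h216.le
            calc (ε * s) ^ 2 = (ε * s) * (ε * s) := sq (ε*s) ▸ by ring
              _ ≤ (ε * s) * t ^ 3 := mul_le_mul_of_nonneg_left ht3 hεs.le
        _ = 216 / c ^ 3 * (ε * s) * (c ^ 3 * t ^ 3) := by ring
    calc t ^ 3 * Real.exp (-(c * t ^ 2) / (2 * ε))
        ≤ t ^ 3 * (27 / x ^ 3) := by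
          apply mul_le_mul_of_nonneg_left hexp (by positivity)
      _ = 216 * ε ^ 3 / (c ^ 3 * t ^ 3) := hcalc
      _ ≤ 216 / c ^ 3 * (ε * s) := hfinal
      _ ≤ (1 + 216 / c ^ 3) * (ε * s) := by nlinarith

lemma taylor_bd {m : ℕ} (f : EuclideanSpace ℝ (Fin m) → ℂ) (L : ℝ) (hf : ContDiff ℝ 3 f)
    (hL : ∀ y, ‖iteratedFDeriv ℝ 3 f y‖ ≤ L) (X x : EuclideanSpace ℝ (Fin m)) :
    ‖f x - f X - fderiv ℝ f X (x - X)
      - (1/2 : ℂ) * fderiv ℝ (fderiv ℝ f) X (x - X) (x - X)‖ ≤ L * ‖x - X‖ ^ 3 := by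
  have hL0 : 0 ≤ L := le_trans (norm_nonneg _) (hL X)
  have hg : ContDiff ℝ 2 (fderiv ℝ f) := hf.fderiv_right (by norm_num)
  have hh : ContDiff ℝ 1 (fderiv ℝ (fderiv ℝ f)) := hg.fderiv_right (by norm_num)
  set g := fderiv ℝ f with hgdef
  set h := fderiv ℝ g with hhdef
  set D2 := h X with hD2def
  letI : NormedAddCommGroup (EuclideanSpace ℝ (Fin m) →L[ℝ] EuclideanSpace ℝ (Fin m) →L[ℝ] ℂ) := inferInstance
  letI : NormedSpace ℝ (EuclideanSpace ℝ (Fin m) →L[ℝ] EuclideanSpace ℝ (Fin m) →L[ℝ] ℂ) := inferInstance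
  -- step 0 : h is L-Lipschitz
  have hnorm : ∀ z, ‖fderiv ℝ h z‖ ≤ L := by
    intro z
    have e : ‖fderiv ℝ h z‖ = ‖iteratedFDeriv ℝ 3 f z‖ := by
      calc ‖fderiv ℝ h z‖ = ‖iteratedFDeriv ℝ 0 (fderiv ℝ h) z‖ := by
            rw [norm_iteratedFDeriv_zero]
        _ = ‖iteratedFDeriv ℝ 1 h z‖ := norm_iteratedFDeriv_fderiv
        _ = ‖iteratedFDeriv ℝ 2 g z‖ := norm_iteratedFDeriv_fderiv
        _ = ‖iteratedFDeriv ℝ 3 f z‖ := norm_iteratedFDeriv_fderiv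
    rw [e]; exact hL z
  have step0 : ∀ z : (EuclideanSpace ℝ (Fin m)), ‖h z - h X‖ ≤ L * ‖z - X‖ := by
    intro z
    have := convex_univ.norm_image_sub_le_of_norm_fderiv_le
      (f := h) (C := L) (fun w _ => hh.differentiable one_ne_zero w)
      (fun w _ => hnorm w) (Set.mem_univ X) (Set.mem_univ z)
    simpa using this
  have hgdiff : ∀ z : (EuclideanSpace ℝ (Fin m)), HasFDerivAt g (h z) z :=
    fun z => (hg.differentiable two_ne_zero z).hasFDerivAt
  -- step 1
  have step1 : ∀ y : (EuclideanSpace ℝ (Fin m)), ‖g y - g X - D2 (y - X)‖ ≤ L * ‖y - X‖ ^ 2 := by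
    intro y
    set s : Set (EuclideanSpace ℝ (Fin m)) := Metric.closedBall X ‖y - X‖ with hsdef
    have hXs : X ∈ s := Metric.mem_closedBall_self (norm_nonneg _)
    have hys : y ∈ s := by simp [hsdef, Metric.mem_closedBall, dist_eq_norm]
    have hder : ∀ z ∈ s, HasFDerivWithinAt (fun w => g w - D2 (w - X)) (h z - D2) s z := by
      intro z _
      have hq : HasFDerivAt (fun w : (EuclideanSpace ℝ (Fin m)) => D2 (w - X)) D2 z := by
        have := (D2.hasFDerivAt (x := z)).sub_const (D2 X)
        simpa [map_sub] using this
      exact ((hgdiff z).sub hq).hasFDerivWithinAt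
    have hbd : ∀ z ∈ s, ‖h z - D2‖ ≤ L * ‖y - X‖ := by
      intro z hz
      refine le_trans (step0 z) (mul_le_mul_of_nonneg_left ?_ hL0)
      simpa [hsdef, Metric.mem_closedBall, dist_eq_norm] using hz
    have := Convex.norm_image_sub_le_of_norm_hasFDerivWithin_le hder hbd
      (convex_closedBall X ‖y - X‖) hXs hys
    simp only [sub_self, map_zero, sub_zero] at this
    calc ‖g y - g X - D2 (y - X)‖ = ‖g y - D2 (y - X) - g X‖ := by congr 1; abel
      _ ≤ L * ‖y - X‖ * ‖y - X‖ := this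
      _ = L * ‖y - X‖ ^ 2 := by ring
  -- symmetry
  have hsymm : ∀ v w : (EuclideanSpace ℝ (Fin m)), D2 v w = D2 w v := by
    intro v w
    exact (hf.contDiffAt.isSymmSndFDerivAt (by norm_num)) v w
  -- step 2
  set H : (EuclideanSpace ℝ (Fin m)) → ℂ := fun w => f w - g X (w - X) - (1/2 : ℂ) * D2 (w - X) (w - X) with hHdef
  set s : Set (EuclideanSpace ℝ (Fin m)) := Metric.closedBall X ‖x - X‖ with hsdef
  have hXs : X ∈ s := Metric.mem_closedBall_self (norm_nonneg _)
  have hxs : x ∈ s := by simp [hsdef, Metric.mem_closedBall, dist_eq_norm]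
  have hder : ∀ z ∈ s, HasFDerivWithinAt H (g z - g X - D2 (z - X)) s z := by
    intro z _
    have h1 : HasFDerivAt f (g z) z := (hf.differentiable (by norm_num) z).hasFDerivAt
    have h2 : HasFDerivAt (fun w : (EuclideanSpace ℝ (Fin m)) => g X (w - X)) (g X) z := by
      have := ((g X).hasFDerivAt (x := z)).sub_const (g X X)
      simpa [map_sub] using this
    have hc : HasFDerivAt (fun w : (EuclideanSpace ℝ (Fin m)) => D2 (w - X)) D2 z := by
      have := (D2.hasFDerivAt (x := z)).sub_const (D2 X)
      simpa [map_sub] using this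
    have hu : HasFDerivAt (fun w : (EuclideanSpace ℝ (Fin m)) => w - X) (ContinuousLinearMap.id ℝ (EuclideanSpace ℝ (Fin m))) z :=
      (hasFDerivAt_id z).sub_const X
    have h3 := hc.clm_apply hu
    have h4 := h3.const_mul (1/2 : ℂ)
    have key : (1/2 : ℂ) • ((D2 (z - X)).comp (ContinuousLinearMap.id ℝ (EuclideanSpace ℝ (Fin m)))
        + (ContinuousLinearMap.flip D2) (z - X)) = D2 (z - X) := by
      ext w
      simp only [ContinuousLinearMap.smul_apply, ContinuousLinearMap.add_apply,
        ContinuousLinearMap.coe_comp', Function.comp_apply, ContinuousLinearMap.coe_id', id_eq,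
        ContinuousLinearMap.flip_apply, smul_eq_mul]
      rw [hsymm w (z - X)]
      ring
    rw [key] at h4
    exact ((h1.sub h2).sub h4).hasFDerivWithinAt
  have hbd : ∀ z ∈ s, ‖g z - g X - D2 (z - X)‖ ≤ L * ‖x - X‖ ^ 2 := by
    intro z hz
    refine le_trans (step1 z) (mul_le_mul_of_nonneg_left ?_ hL0)
    have : ‖z - X‖ ≤ ‖x - X‖ := by
      simpa [hsdef, Metric.mem_closedBall, dist_eq_norm] using hz
    exact pow_le_pow_left₀ (norm_nonneg _) this 2
  have hMV := Convex.norm_image_sub_le_of_norm_hasFDerivWithin_le hder hbd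
    (convex_closedBall X ‖x - X‖) hXs hxs
  have hHX : H X = f X := by simp [hHdef]
  have hgoal : f x - f X - g X (x - X) - (1/2 : ℂ) * D2 (x - X) (x - X) = H x - H X := by
    rw [hHX, hHdef]; ring
  rw [hgoal]
  calc ‖H x - H X‖ ≤ L * ‖x - X‖ ^ 2 * ‖x - X‖ := hMV
    _ = L * ‖x - X‖ ^ 3 := by ring

lemma beam_abs {m : ℕ} (ε : ℝ) (M N : Matrix (Fin m) (Fin m) ℝ)
    (X P : EuclideanSpace ℝ (Fin m)) (S : ℝ) (A : ℂ) (x : EuclideanSpace ℝ (Fin m)) :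
    ‖gaussianBeam ε M N X P S A x‖
      = ‖A‖ *
        Real.exp (-(∑ i, ∑ j, M i j * (x i - X i) * (x j - X j)) / (2 * ε)) := by
  rw [gaussianBeam, norm_mul, Complex.norm_exp]
  congr 2
  have h2ε : (2 : ℂ) * (ε : ℂ) = ((2 * ε : ℝ) : ℂ) := by push_cast; ring
  have hre : (∑ i, ∑ j, ((M i j : ℂ) + Complex.I * (N i j : ℂ)) * ((x i - X i : ℝ) : ℂ)
      * ((x j - X j : ℝ) : ℂ)).re = ∑ i, ∑ j, M i j * (x i - X i) * (x j - X j) := by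
    rw [Complex.re_sum]; apply Finset.sum_congr rfl; intro i _
    rw [Complex.re_sum]; apply Finset.sum_congr rfl; intro j _
    simp [Complex.mul_re, Complex.mul_im]
  rw [Complex.add_re, Complex.add_re, Complex.neg_re, h2ε, Complex.div_ofReal_re, hre]
  have e1 : (Complex.I * ((∑ i, P i * (x i - X i) : ℝ) : ℂ) / (ε : ℂ)).re = 0 := by
    rw [Complex.div_ofReal_re]; simp
  have e2 : (Complex.I * (S : ℂ) / (ε : ℂ)).re = 0 := by
    rw [Complex.div_ofReal_re]; simp
  rw [e1, e2]
  ring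

/-- Multiplying the second-order Taylor remainder of a `C³` function `f` (with bounded
third derivative) by the Gaussian beam gives a quantity of size `O(ε^{3/2})`. -/
theorem gaussianBeam_taylor_remainder {m : ℕ} (hm : 1 ≤ m)
    (M N : Matrix (Fin m) (Fin m) ℝ) (hMsymm : M.IsSymm) (hMpos : M.PosDef)
    (hNsymm : N.IsSymm) (X P : EuclideanSpace ℝ (Fin m)) (S : ℝ) (A : ℂ)
    (f : EuclideanSpace ℝ (Fin m) → ℂ) (L : ℝ) (hf : ContDiff ℝ 3 f)
    (hL : ∀ y : EuclideanSpace ℝ (Fin m), ‖iteratedFDeriv ℝ 3 f y‖ ≤ L) :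
    ∃ C : ℝ, 0 < C ∧ ∀ ε : ℝ, 0 < ε → ∀ x : EuclideanSpace ℝ (Fin m),
      ‖(f x - f X - fderiv ℝ f X (x - X)
          - (1 / 2 : ℂ) * iteratedFDeriv ℝ 2 f X ![x - X, x - X])
        * gaussianBeam ε M N X P S A x‖ ≤ C * ε ^ ((3 : ℝ) / 2) := by
  obtain ⟨c, hc, hQ⟩ := quad_lb hm M hMpos
  have hL0 : 0 ≤ L := le_trans (norm_nonneg _) (hL X)
  have hA0 : 0 ≤ ‖A‖ := norm_nonneg _
  have hCpos : 0 < (L + 1) * (‖A‖ + 1) * (1 + 216 / c ^ 3) := by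
    have h1 : (0:ℝ) < L + 1 := by linarith
    have h2 : (0:ℝ) < ‖A‖ + 1 := by linarith
    have h3 : (0:ℝ) < 1 + 216 / c ^ 3 := by positivity
    positivity
  refine ⟨(L + 1) * (‖A‖ + 1) * (1 + 216 / c ^ 3), hCpos, ?_⟩
  intro ε hε x
  have hpow : ε ^ ((3 : ℝ) / 2) = ε * Real.sqrt ε := by
    rw [Real.sqrt_eq_rpow, show (3:ℝ)/2 = 1 + 1/2 by norm_num, Real.rpow_add hε,
      Real.rpow_one]
  have hR : ‖f x - f X - fderiv ℝ f X (x - X)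
      - (1 / 2 : ℂ) * iteratedFDeriv ℝ 2 f X ![x - X, x - X]‖ ≤ L * ‖x - X‖ ^ 3 := by
    have h2 : iteratedFDeriv ℝ 2 f X ![x - X, x - X]
        = fderiv ℝ (fderiv ℝ f) X (x - X) (x - X) := by
      rw [iteratedFDeriv_two_apply]; simp
    rw [h2]
    exact taylor_bd f L hf hL X x
  have hG : ‖gaussianBeam ε M N X P S A x‖
      ≤ ‖A‖ * Real.exp (-(c * ‖x - X‖ ^ 2) / (2 * ε)) := by
    rw [beam_abs]
    apply mul_le_mul_of_nonneg_left _ hA0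
    apply Real.exp_le_exp.mpr
    have h2ε : (0:ℝ) < 2 * ε := by linarith
    have hq := hQ (x - X)
    have hq' : c * ‖x - X‖ ^ 2 ≤ ∑ i, ∑ j, M i j * (x i - X i) * (x j - X j) := hq
    exact (div_le_div_iff_of_pos_right h2ε).mpr (neg_le_neg hq')
  have hcube := cube_exp_bound hc hε ‖x - X‖ (norm_nonneg _)
  calc ‖(f x - f X - fderiv ℝ f X (x - X)
          - (1 / 2 : ℂ) * iteratedFDeriv ℝ 2 f X ![x - X, x - X])
        * gaussianBeam ε M N X P S A x‖
      = ‖f x - f X - fderiv ℝ f X (x - X)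
          - (1 / 2 : ℂ) * iteratedFDeriv ℝ 2 f X ![x - X, x - X]‖
        * ‖gaussianBeam ε M N X P S A x‖ := norm_mul _ _
    _ ≤ (L * ‖x - X‖ ^ 3) * (‖A‖ * Real.exp (-(c * ‖x - X‖ ^ 2) / (2 * ε))) := by
        apply mul_le_mul hR hG (norm_nonneg _) (by positivity)
    _ = (L * ‖A‖) * (‖x - X‖ ^ 3 * Real.exp (-(c * ‖x - X‖ ^ 2) / (2 * ε))) := by
        ring
    _ ≤ (L * ‖A‖) * ((1 + 216 / c ^ 3) * (ε * Real.sqrt ε)) := by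
        apply mul_le_mul_of_nonneg_left hcube (by positivity)
    _ ≤ (L + 1) * (‖A‖ + 1) * (1 + 216 / c ^ 3) * ε ^ ((3 : ℝ) / 2) := by
        rw [hpow]
        have h3 : (0:ℝ) ≤ 1 + 216 / c ^ 3 := by positivity
        have h4 : (0:ℝ) ≤ ε * Real.sqrt ε := by positivity
        have h5 : L * ‖A‖ ≤ (L + 1) * (‖A‖ + 1) := by nlinarith
        nlinarith [mul_nonneg h3 h4, mul_le_mul_of_nonneg_right h5 (mul_nonneg h3 h4)]
end

section
/- Let K ≥ 1, let a₁,…,a_K : ℝ → ℝ be continuous, and let μ₀, μ₁,…,μ_K : ℝ → ℝ be continuous. Define F₀(t) = exp( ∫₀ᵗ μ₀(s) ds ) and, recursively for k = 1,…,K, F_k(t) = ∫₀ᵗ F_{k−1}(s) · a_k(s) · exp( ∫ₛᵗ μ_k(r) dr ) ds. Then for every t ≥ 0, F_K(t) = ∫_{0 ≤ t₁ ≤ ⋯ ≤ t_K ≤ t} ( ∏_{k=1}^{K} a_k(t_k) ) · exp( Σ_{k=0}^{K} ∫_{t_k}^{t_{k+1}} μ_k(s) ds ) dt₁ ⋯ dt_K,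 where by convention t₀ = 0 and t_{K+1} = t. -/
/-- The iterated integral `∫_{S_t^K} g(t₁,…,t_K) dt₁⋯dt_K` over the simplex
`S_t^K = {0 ≤ t₁ ≤ ⋯ ≤ t_K ≤ t}`, defined recursively on the outermost variable. -/
noncomputable def simplexIntegralR : (K : ℕ) → ((Fin K → ℝ) → ℝ) → ℝ → ℝ
  | 0, g, _ => g (fun i => i.elim0)
  | K + 1, g, t => ∫ s in (0:ℝ)..t, simplexIntegralR K (fun τ => g (Fin.snoc τ s)) s

/-- The recursion `F₀(t) = exp(∫₀ᵗ μ₀)`,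
`F_k(t) = ∫₀ᵗ F_{k−1}(s) a_k(s) exp(∫ₛᵗ μ_k) ds`. -/
noncomputable def jumpRec (a μ : ℕ → ℝ → ℝ) : ℕ → ℝ → ℝ
  | 0, t => Real.exp (∫ s in (0:ℝ)..t, μ 0 s)
  | k + 1, t => ∫ s in (0:ℝ)..t,
      jumpRec a μ k s * a (k + 1) s * Real.exp (∫ r in s..t, μ (k + 1) r)

/-- The extended time vector `(t₀, t₁, …, t_K, t_{K+1}) = (0, t₁, …, t_K, t)`. -/
def extTimes {K : ℕ} (τ : Fin K → ℝ) (t : ℝ) : Fin (K + 2) → ℝ :=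
  Fin.snoc (Fin.cons 0 τ : Fin (K + 1) → ℝ) t

private lemma simplexIntegralR_mul_const (c : ℝ) :
    ∀ (K : ℕ) (g : (Fin K → ℝ) → ℝ) (t : ℝ),
      simplexIntegralR K (fun τ => g τ * c) t = simplexIntegralR K g t * c
  | 0, _, _ => rfl
  | K + 1, g, t => by
    simp only [simplexIntegralR]
    rw [← intervalIntegral.integral_mul_const]
    exact intervalIntegral.integral_congr fun s _ => simplexIntegralR_mul_const c K _ s

private lemma extTimes_castSucc {K : ℕ} (σ : Fin K → ℝ) (s t : ℝ) (i : Fin (K + 2)) :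
    extTimes (Fin.snoc σ s) t i.castSucc = extTimes σ s i := by
  simp [extTimes, Fin.cons_snoc_eq_snoc_cons]

private lemma jump_aux (a μ : ℕ → ℝ → ℝ) :
    ∀ (K : ℕ) (t : ℝ), 0 ≤ t →
      jumpRec a μ K t =
        simplexIntegralR K
          (fun τ => (∏ k : Fin K, a ((k : ℕ) + 1) (τ k)) *
            Real.exp (∑ k : Fin (K + 1),
              ∫ s in (extTimes τ t k.castSucc)..(extTimes τ t k.succ), μ (k : ℕ) s))
          t
  | 0, t, _ => by
    have e0 : extTimes (fun i : Fin 0 => i.elim0) t (0 : Fin 2) = 0 := rfl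
    have e1 : extTimes (fun i : Fin 0 => i.elim0) t (1 : Fin 2) = t := by
      rw [show (1 : Fin 2) = Fin.last 1 from rfl]; exact Fin.snoc_last _ _
    simp [jumpRec, simplexIntegralR, e0, e1]
  | K + 1, t, ht => by
    rw [jumpRec, simplexIntegralR]
    apply intervalIntegral.integral_congr
    intro s hs
    rw [Set.uIcc_of_le ht] at hs
    dsimp only
    rw [jump_aux a μ K s hs.1, mul_assoc, ← simplexIntegralR_mul_const]
    congr 1
    funext σ
    have hA : extTimes σ s (Fin.last (K + 1)) = s := Fin.snoc_last _ _
    have hB : extTimes (Fin.snoc σ s) t (Fin.last (K + 2)) = t := Fin.snoc_last _ _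
    conv_rhs => rw [Fin.prod_univ_castSucc, Fin.sum_univ_castSucc]
    rw [Real.exp_add]
    simp only [Fin.snoc_castSucc, Fin.snoc_last, Fin.val_last, Fin.coe_castSucc,
      Fin.succ_castSucc, Fin.succ_last, extTimes_castSucc, hA, hB]
    ring

/-- The appendix identity: the recursion `F_K` equals the explicit iterated integral
`∫_{0≤t₁≤⋯≤t_K≤t} (∏_{k=1}^K a_k(t_k)) exp(Σ_{k=0}^K ∫_{t_k}^{t_{k+1}} μ_k(s) ds) dt`,
with the conventions `t₀ = 0` and `t_{K+1} = t`. -/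
theorem jumpRec_eq_simplexIntegral (K : ℕ) (hK : 1 ≤ K)
    (a μ : ℕ → ℝ → ℝ) (ha : ∀ k, Continuous (a k)) (hμ : ∀ k, Continuous (μ k)) :
    ∀ t ≥ (0:ℝ),
      jumpRec a μ K t =
        simplexIntegralR K
          (fun τ => (∏ k : Fin K, a ((k : ℕ) + 1) (τ k)) *
            Real.exp (∑ k : Fin (K + 1),
              ∫ s in (extTimes τ t k.castSucc)..(extTimes τ t k.succ), μ (k : ℕ) s))
          t :=
  fun t ht => jump_aux a μ K t ht
end
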